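/- In Cl(ℝ³), a multivector M = a + v + jw + jt fails to be invertible if and only if (v + jw)² = (a + jt)², i.e. a² + w² = v² + t² and at = v·w. -/

import Mathlib

noncomputable section
open CliffordAlgebra

/-- The Euclidean quadratic form on `ℝ³`. -/
def Q3 : QuadraticForm ℝ (Fin 3 → ℝ) :=
  QuadraticMap.weightedSumSquares ℝ (fun _ : Fin 3 => (1 : ℝ))

/-- The Clifford algebra `Cl(ℝ³)`. -/
abbrev Cl3 := CliffordAlgebra Q3

/-- The orthonormal basis vectors `e₁, e₂, e₃` of `Cl(ℝ³)`. -/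
def e (i : Fin 3) : Cl3 := ι Q3 (Pi.single i 1)

/-- The pseudoscalar `j = e₁e₂e₃` of `Cl(ℝ³)`. -/
def jj : Cl3 := e 0 * e 1 * e 2

lemma Q3_apply (x : Fin 3 → ℝ) : Q3 x = x 0 * x 0 + x 1 * x 1 + x 2 * x 2 := by
  simp [Q3, QuadraticMap.weightedSumSquares_apply, Fin.sum_univ_three]

lemma vec_decomp (x : Fin 3 → ℝ) :
    x = x 0 • (Pi.single 0 1 : Fin 3 → ℝ) + x 1 • (Pi.single 1 1 : Fin 3 → ℝ)
      + x 2 • (Pi.single 2 1 : Fin 3 → ℝ) := by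
  funext i
  fin_cases i <;> simp

lemma e_sq (i : Fin 3) : e i * e i = 1 := by
  rw [e, ι_sq_scalar]
  fin_cases i <;> simp [Q3_apply]

lemma e_anticomm {i k : Fin 3} (h : i ≠ k) : e i * e k = - (e k * e i) := by
  have h2 := ι_mul_ι_add_swap (Q := Q3) (Pi.single i 1) (Pi.single k 1)
  have hp : QuadraticMap.polar (⇑Q3) (Pi.single i 1) (Pi.single k 1) = 0 := by
    fin_cases i <;> fin_cases k <;> simp_all [QuadraticMap.polar, Q3_apply, Pi.single_apply]
  rw [hp, map_zero] at h2
  rw [e, e]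
  have : ι Q3 (Pi.single i 1) * ι Q3 (Pi.single k 1) +
      ι Q3 (Pi.single k 1) * ι Q3 (Pi.single i 1) = 0 := h2
  exact eq_neg_of_add_eq_zero_left this

lemma h10 : e 1 * e 0 = -(e 0 * e 1) := e_anticomm (by decide)
lemma h20 : e 2 * e 0 = -(e 0 * e 2) := e_anticomm (by decide)
lemma h21 : e 2 * e 1 = -(e 1 * e 2) := e_anticomm (by decide)
lemma e_sq0 : e 0 * e 0 = 1 := e_sq 0
lemma e_sq1 : e 1 * e 1 = 1 := e_sq 1
lemma e_sq2 : e 2 * e 2 = 1 := e_sq 2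


lemma s10 (x : Cl3) : e 1 * (e 0 * x) = -(e 0 * (e 1 * x)) := by
  rw [← mul_assoc, h10, ← mul_assoc]; rw [neg_mul, mul_assoc]
lemma s20 (x : Cl3) : e 2 * (e 0 * x) = -(e 0 * (e 2 * x)) := by
  rw [← mul_assoc, h20, ← mul_assoc]; rw [neg_mul, mul_assoc]
lemma s21 (x : Cl3) : e 2 * (e 1 * x) = -(e 1 * (e 2 * x)) := by
  rw [← mul_assoc, h21, ← mul_assoc]; rw [neg_mul, mul_assoc]
lemma q0 (x : Cl3) : e 0 * (e 0 * x) = x := by rw [← mul_assoc, e_sq0, one_mul]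
lemma q1 (x : Cl3) : e 1 * (e 1 * x) = x := by rw [← mul_assoc, e_sq1, one_mul]
lemma q2 (x : Cl3) : e 2 * (e 2 * x) = x := by rw [← mul_assoc, e_sq2, one_mul]

lemma jj_sq : jj * jj = -1 := by
  simp only [jj, mul_assoc, mul_neg, neg_mul, neg_neg, mul_one,
    s10, s20, s21, q0, q1, q2, h10, h20, h21, e_sq0, e_sq1, e_sq2]

lemma jj_e0 : jj * e 0 = e 0 * jj := by
  simp only [jj, mul_assoc, mul_neg, neg_mul, neg_neg, mul_one,
    s10, s20, s21, q0, q1, q2, h10, h20, h21, e_sq0, e_sq1, e_sq2]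

lemma jj_e1 : jj * e 1 = e 1 * jj := by
  simp only [jj, mul_assoc, mul_neg, neg_mul, neg_neg, mul_one,
    s10, s20, s21, q0, q1, q2, h10, h20, h21, e_sq0, e_sq1, e_sq2]

lemma jj_e2 : jj * e 2 = e 2 * jj := by
  simp only [jj, mul_assoc, mul_neg, neg_mul, neg_neg, mul_one,
    s10, s20, s21, q0, q1, q2, h10, h20, h21, e_sq0, e_sq1, e_sq2]

lemma jj_iota (x : Fin 3 → ℝ) : jj * ι Q3 x = ι Q3 x * jj := by
  rw [vec_decomp x]
  simp only [map_add, map_smul, mul_add, add_mul, mul_smul_comm, smul_mul_assoc]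
  rw [show ι Q3 ((Pi.single 0 1 : Fin 3 → ℝ)) = e 0 from rfl,
      show ι Q3 ((Pi.single 1 1 : Fin 3 → ℝ)) = e 1 from rfl,
      show ι Q3 ((Pi.single 2 1 : Fin 3 → ℝ)) = e 2 from rfl,
      jj_e0, jj_e1, jj_e2]

def hC : ℂ →ₐ[ℝ] Cl3 := Complex.liftAux jj jj_sq

lemma hC_apply (z : ℂ) : hC z = algebraMap ℝ Cl3 z.re + z.im • jj :=
  Complex.liftAux_apply jj jj_sq z

lemma hC_comm_iota (z : ℂ) (x : Fin 3 → ℝ) : hC z * ι Q3 x = ι Q3 x * hC z := by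
  rw [hC_apply, add_mul, mul_add, smul_mul_assoc, jj_iota, Algebra.commutes,
    mul_smul_comm]

lemma iota_eq (r₁ r₂ r₃ : ℝ) :
    r₁ • e 0 + r₂ • e 1 + r₃ • e 2 = ι Q3 ![r₁, r₂, r₃] := by
  rw [vec_decomp ![r₁, r₂, r₃]]
  simp only [map_add, map_smul, Matrix.cons_val_zero, Matrix.cons_val_one, Matrix.head_cons,
    Matrix.cons_val_two, Matrix.tail_cons]
  rfl

lemma F_sq (vv ww : Fin 3 → ℝ) :
    (ι Q3 vv + jj * ι Q3 ww) * (ι Q3 vv + jj * ι Q3 ww) =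
    hC ⟨Q3 vv - Q3 ww, QuadraticMap.polar (⇑Q3) vv ww⟩ := by
  have key := ι_mul_ι_add_swap (Q := Q3) vv ww
  have h2 : ι Q3 vv * (jj * ι Q3 ww) = jj * (ι Q3 vv * ι Q3 ww) := by
    rw [← mul_assoc, ← jj_iota, mul_assoc]
  have h3 : jj * ι Q3 ww * ι Q3 vv = jj * (ι Q3 ww * ι Q3 vv) := mul_assoc _ _ _
  have h4 : jj * ι Q3 ww * (jj * ι Q3 ww) = -(algebraMap ℝ Cl3 (Q3 ww)) := by
    rw [mul_assoc, ← mul_assoc (ι Q3 ww), ← jj_iota, mul_assoc, ← mul_assoc,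
      jj_sq, ι_sq_scalar, neg_one_mul]
  simp only [add_mul, mul_add, ι_sq_scalar, h2, h3, h4]
  have h5 : jj * (ι Q3 vv * ι Q3 ww) + jj * (ι Q3 ww * ι Q3 vv)
      = QuadraticMap.polar (⇑Q3) vv ww • jj := by
    rw [← mul_add, key, ← Algebra.commutes, ← Algebra.smul_def]
  rw [hC_apply, map_sub, ← h5]
  abel

lemma jj_eq_hC_I : hC Complex.I = jj := by
  rw [hC_apply]
  simp

lemma hC_comm_F (z : ℂ) (vv ww : Fin 3 → ℝ) :
    hC z * (ι Q3 vv + jj * ι Q3 ww) = (ι Q3 vv + jj * ι Q3 ww) * hC z := by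
  have hjj : hC z * jj = jj * hC z := by
    rw [← jj_eq_hC_I, ← map_mul, ← map_mul, mul_comm]
  rw [mul_add, add_mul, hC_comm_iota, ← mul_assoc, hjj, mul_assoc, hC_comm_iota,
    ← mul_assoc]

lemma invertible_of_aux (c b : ℂ) (F M : Cl3)
    (hMF : M = hC c + F)
    (e2 : F * F = hC b)
    (hcm : ∀ z : ℂ, hC z * F = F * hC z)
    (hd : c ^ 2 - b ≠ 0) :
    ∃ N : Cl3, M * N = 1 ∧ N * M = 1 := by
  set d : ℂ := c ^ 2 - b with hdd
  have e1 : hC c * hC c = hC (c * c) := (map_mul hC c c).symm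
  have hMG : M * (hC c - F) = hC d := by
    rw [hMF, add_mul, mul_sub, mul_sub, e1, e2, hcm c,
      show d = c * c - b by rw [hdd]; ring, map_sub]
    abel
  have hGM : (hC c - F) * M = hC d := by
    rw [hMF, sub_mul, mul_add, mul_add, e1, e2, hcm c,
      show d = c * c - b by rw [hdd]; ring, map_sub]
    abel
  refine ⟨(hC c - F) * hC d⁻¹, ?_, ?_⟩
  · rw [← mul_assoc, hMG, ← map_mul, mul_inv_cancel₀ hd, map_one]
  · have hcmM : hC d⁻¹ * M = M * hC d⁻¹ := by
      rw [hMF, mul_add, add_mul, ← map_mul, ← map_mul, mul_comm d⁻¹ c, hcm]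
    rw [mul_assoc, hcmM, ← mul_assoc, hGM, ← map_mul, mul_inv_cancel₀ hd, map_one]

lemma invertible_of (a t : ℝ) (vv ww : Fin 3 → ℝ) (M : Cl3)
    (hMF : M = hC ⟨a, t⟩ + (ι Q3 vv + jj * ι Q3 ww))
    (hd : (⟨a, t⟩ : ℂ) ^ 2 - ⟨Q3 vv - Q3 ww, QuadraticMap.polar (⇑Q3) vv ww⟩ ≠ 0) :
    ∃ N : Cl3, M * N = 1 ∧ N * M = 1 :=
  invertible_of_aux _ _ _ M hMF (F_sq vv ww) (fun z => hC_comm_F z vv ww) hd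

open Matrix in
def P0 : Matrix (Fin 2) (Fin 2) ℂ := !![0, 1; 1, 0]
def P1 : Matrix (Fin 2) (Fin 2) ℂ := !![0, -Complex.I; Complex.I, 0]
def P2 : Matrix (Fin 2) (Fin 2) ℂ := !![1, 0; 0, -1]

open Matrix

def fP : (Fin 3 → ℝ) →ₗ[ℝ] Matrix (Fin 2) (Fin 2) ℂ where
  toFun x := x 0 • P0 + x 1 • P1 + x 2 • P2
  map_add' x y := by simp [add_smul]; abel
  map_smul' r x := by simp only [smul_add, smul_smul, RingHom.id_apply, Pi.smul_apply, smul_eq_mul]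

lemma fP_sq (x : Fin 3 → ℝ) : fP x * fP x = algebraMap ℝ (Matrix (Fin 2) (Fin 2) ℂ) (Q3 x) := by
  have hq : Q3 x = x 0 * x 0 + x 1 * x 1 + x 2 * x 2 := by
    simp [Q3, QuadraticMap.weightedSumSquares_apply, Fin.sum_univ_three]
  ext i j
  fin_cases i <;> fin_cases j <;>
    simp [fP, P0, P1, P2, hq, Matrix.mul_apply, Fin.sum_univ_two,
      Matrix.algebraMap_matrix_apply, Complex.ext_iff] <;> (try constructor) <;> (try trivial) <;> ring


def phi : Cl3 →ₐ[ℝ] Matrix (Fin 2) (Fin 2) ℂ := CliffordAlgebra.lift Q3 ⟨fP, fP_sq⟩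

lemma phi_e (i : Fin 3) : phi (e i) = [P0, P1, P2].get i := by
  rw [e, phi, CliffordAlgebra.lift_ι_apply]
  fin_cases i <;> simp [fP] <;> ext k l <;> fin_cases k <;> fin_cases l <;>
    simp [P0, P1, P2]

lemma phi_e0 : phi (e 0) = P0 := phi_e 0
lemma phi_e1 : phi (e 1) = P1 := phi_e 1
lemma phi_e2 : phi (e 2) = P2 := phi_e 2

lemma phi_jj : phi jj = !![Complex.I, 0; 0, Complex.I] := by
  rw [jj, _root_.map_mul, _root_.map_mul, phi_e0, phi_e1, phi_e2]
  ext k l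
  fin_cases k <;> fin_cases l <;>
    simp [P0, P1, P2, Matrix.mul_apply, Fin.sum_univ_two]

lemma det_phi_zero (a t v₁ v₂ v₃ w₁ w₂ w₃ : ℝ) (M : Cl3)
    (hM : M = algebraMap ℝ Cl3 a + (v₁ • e 0 + v₂ • e 1 + v₃ • e 2) +
      jj * (w₁ • e 0 + w₂ • e 1 + w₃ • e 2) + t • jj)
    (h1 : a ^ 2 + (w₁ ^ 2 + w₂ ^ 2 + w₃ ^ 2) = (v₁ ^ 2 + v₂ ^ 2 + v₃ ^ 2) + t ^ 2)
    (h2 : a * t = v₁ * w₁ + v₂ * w₂ + v₃ * w₃) :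
    (phi M).det = 0 := by
  have hφ : phi M = !![(a : ℂ) + t * Complex.I + (v₃ + w₃ * Complex.I),
      (v₁ + w₁ * Complex.I) - Complex.I * (v₂ + w₂ * Complex.I);
      (v₁ + w₁ * Complex.I) + Complex.I * (v₂ + w₂ * Complex.I),
      (a : ℂ) + t * Complex.I - (v₃ + w₃ * Complex.I)] := by
    rw [hM]
    simp only [map_add, map_smul, _root_.map_mul, phi_e0, phi_e1, phi_e2, phi_jj,
      AlgHom.commutes]
    ext k l
    fin_cases k <;> fin_cases l <;>
      simp [P0, P1, P2, Matrix.mul_apply, Fin.sum_univ_two,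
        Matrix.algebraMap_matrix_apply, Complex.ext_iff]
    all_goals try ring
    trivial
  have h1c : ((a : ℂ) ^ 2 + ((w₁ : ℂ) ^ 2 + (w₂ : ℂ) ^ 2 + (w₃ : ℂ) ^ 2))
      = ((v₁ : ℂ) ^ 2 + (v₂ : ℂ) ^ 2 + (v₃ : ℂ) ^ 2) + (t : ℂ) ^ 2 := by exact_mod_cast h1
  have h2c : (a : ℂ) * t = (v₁ : ℂ) * w₁ + (v₂ : ℂ) * w₂ + (v₃ : ℂ) * w₃ := by
    exact_mod_cast h2
  have hI : Complex.I ^ 2 = -1 := Complex.I_sq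
  rw [hφ, Matrix.det_fin_two_of]
  linear_combination h1c + 2 * Complex.I * h2c +
    ((w₂ : ℂ) ^ 2 * Complex.I ^ 2 + 2 * (v₂ : ℂ) * w₂ * Complex.I +
      ((t : ℂ) ^ 2 - (w₃ : ℂ) ^ 2 - (w₁ : ℂ) ^ 2 + (v₂ : ℂ) ^ 2 - (w₂ : ℂ) ^ 2)) * hI


lemma Q3_vec (r₁ r₂ r₃ : ℝ) : Q3 ![r₁, r₂, r₃] = r₁ ^ 2 + r₂ ^ 2 + r₃ ^ 2 := by
  rw [Q3_apply]
  simp [Matrix.cons_val_zero, Matrix.cons_val_one]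
  ring

lemma polar_vec (v₁ v₂ v₃ w₁ w₂ w₃ : ℝ) :
    QuadraticMap.polar (⇑Q3) ![v₁, v₂, v₃] ![w₁, w₂, w₃]
      = 2 * (v₁ * w₁ + v₂ * w₂ + v₃ * w₃) := by
  rw [QuadraticMap.polar]
  have : (![v₁, v₂, v₃] + ![w₁, w₂, w₃] : Fin 3 → ℝ) = ![v₁ + w₁, v₂ + w₂, v₃ + w₃] := by
    funext i; fin_cases i <;> simp
  rw [this, Q3_vec, Q3_vec, Q3_vec]
  ring


/-- `M = a + v + jw + jt` in `Cl(ℝ³)` fails to be invertible iff `(v + jw)² = (a + jt)²`,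
i.e. `a² + w² = v² + t²` and `at = v·w`. -/
theorem not_invertible_iff (a t v₁ v₂ v₃ w₁ w₂ w₃ : ℝ)
    (M : Cl3)
    (hM : M = algebraMap ℝ Cl3 a + (v₁ • e 0 + v₂ • e 1 + v₃ • e 2) +
      jj * (w₁ • e 0 + w₂ • e 1 + w₃ • e 2) + t • jj) :
    (¬ ∃ N : Cl3, M * N = 1 ∧ N * M = 1) ↔
      (a ^ 2 + (w₁ ^ 2 + w₂ ^ 2 + w₃ ^ 2) = (v₁ ^ 2 + v₂ ^ 2 + v₃ ^ 2) + t ^ 2 ∧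
        a * t = v₁ * w₁ + v₂ * w₂ + v₃ * w₃) := by
  constructor
  · -- not invertible → condition; contrapositive
    intro hni
    by_contra hcond
    apply hni
    -- M = hC ⟨a,t⟩ + F
    have hMF : M = hC ⟨a, t⟩ + (ι Q3 ![v₁, v₂, v₃] + jj * ι Q3 ![w₁, w₂, w₃]) := by
      rw [hM, iota_eq v₁ v₂ v₃, iota_eq w₁ w₂ w₃, hC_apply]
      show _ = algebraMap ℝ Cl3 a + t • jj + _
      abel
    apply invertible_of a t ![v₁, v₂, v₃] ![w₁, w₂, w₃] M hMF
    intro hd0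
    apply hcond
    have := sub_eq_zero.mp hd0
    rw [Complex.ext_iff] at this
    obtain ⟨hre, him⟩ := this
    rw [sq] at hre him
    simp only [Complex.mul_re, Complex.mul_im] at hre him
    rw [Q3_vec, Q3_vec] at hre
    rw [polar_vec] at him
    constructor
    · nlinarith [hre]
    · nlinarith [him]
  · -- condition → not invertible
    rintro ⟨h1, h2⟩ ⟨N, hMN, _⟩
    have hdet : (phi M).det = 0 := det_phi_zero a t v₁ v₂ v₃ w₁ w₂ w₃ M hM h1 h2
    have : (phi M * phi N).det = 1 := by
      rw [← _root_.map_mul, hMN, _root_.map_one, Matrix.det_one]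
    rw [Matrix.det_mul, hdet, zero_mul] at this
    exact zero_ne_one this
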